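/- Let S be a metric space, (μ_n) Borel probability measures converging weakly to μ, and (f_n) measurable functions with f_n(s) ≥ K > −∞ for all s ∈ S and n. Then ∫_S liminf_{n→∞, s'→s} f_n(s') dμ(s) ≤ liminf_{n→∞} ∫_S f_n dμ_n. -/

import Mathlib

open MeasureTheory Filter Topology ENNReal

/-- The positive part of an extended real number, as an element of `ℝ≥0∞`. -/
noncomputable def eposPart (x : EReal) : ℝ≥0∞ :=
  if x = ⊤ then ⊤ else ENNReal.ofReal x.toReal

/-- The integral of an extended-real-valued function: `∫ f⁺ dμ − ∫ f⁻ dμ`. -/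
noncomputable def eintegral {S : Type*} [MeasurableSpace S]
    (μ : MeasureTheory.Measure S) (f : S → EReal) : EReal :=
  ((∫⁻ s, eposPart (f s) ∂μ : ℝ≥0∞) : EReal) -
    ((∫⁻ s, eposPart (-f s) ∂μ : ℝ≥0∞) : EReal)

/-- The integral of an extended-real-valued function `f` is defined when
`min(∫ f⁺ dμ, ∫ f⁻ dμ) < ∞`. -/
def EIntegralDefined {S : Type*} [MeasurableSpace S]
    (μ : MeasureTheory.Measure S) (f : S → EReal) : Prop :=
  (∫⁻ s, eposPart (f s) ∂μ) ≠ ⊤ ∨ (∫⁻ s, eposPart (-f s) ∂μ) ≠ ⊤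

/-! ### Basic properties of `eposPart` -/

@[simp] lemma eposPart_top : eposPart ⊤ = ⊤ := by simp [eposPart]

@[simp] lemma eposPart_coe (r : ℝ) : eposPart (r : EReal) = ENNReal.ofReal r := by
  simp [eposPart]

@[simp] lemma eposPart_bot : eposPart ⊥ = 0 := by simp [eposPart]

lemma eposPart_nonpos {x : EReal} (hx : x ≤ 0) : eposPart x = 0 := by
  induction x using EReal.rec with
  | bot => simp
  | coe r =>
    rw [eposPart_coe, ENNReal.ofReal_eq_zero]
    exact_mod_cast hx
  | top => simp at hx

lemma eposPart_mono : Monotone eposPart := by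
  intro x y h
  by_cases hy : y = ⊤
  · simp [hy]
  by_cases hx : x = ⊤
  · exact absurd (top_le_iff.mp (hx ▸ h)) hy
  by_cases hxb : x = ⊥
  · simp [hxb]
  rw [eposPart, eposPart, if_neg hx, if_neg hy]
  exact ENNReal.ofReal_le_ofReal (EReal.toReal_le_toReal h hxb hy)

lemma eposPart_measurable : Measurable eposPart := eposPart_mono.measurable

lemma continuous_eposPart : Continuous eposPart := by
  rw [continuous_iff_continuousAt]
  intro x
  induction x using EReal.rec with
  | bot =>
    have h0 : ∀ᶠ y in 𝓝 (⊥ : EReal), eposPart y = 0 := by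
      filter_upwards [gt_mem_nhds (show (⊥ : EReal) < ((0 : ℝ) : EReal) from EReal.bot_lt_coe 0)]
        with y hy
      exact eposPart_nonpos (le_of_lt (by exact_mod_cast hy))
    have : Tendsto eposPart (𝓝 (⊥ : EReal)) (𝓝 0) :=
      Tendsto.congr' (by filter_upwards [h0] with y hy using hy.symm) tendsto_const_nhds
    simpa [ContinuousAt] using this
  | coe r =>
    have hev : ∀ᶠ y in 𝓝 ((r : ℝ) : EReal), ENNReal.ofReal y.toReal = eposPart y := by
      filter_upwards [gt_mem_nhds (EReal.coe_lt_top r)] with y hy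
      rw [eposPart, if_neg hy.ne]
    have : Tendsto (fun y : EReal => ENNReal.ofReal y.toReal) (𝓝 ((r : ℝ) : EReal))
        (𝓝 (ENNReal.ofReal r)) := by
      have h1 := EReal.tendsto_toReal (a := ((r : ℝ) : EReal)) (by simp) (by simp)
      simpa [Function.comp_def] using (ENNReal.continuous_ofReal.continuousAt (x := r)).tendsto.comp h1
    have := this.congr' hev
    simpa [ContinuousAt] using this
  | top =>
    rw [ContinuousAt, eposPart_top]
    refine ENNReal.tendsto_nhds_top fun n => ?_
    filter_upwards [lt_mem_nhds (show (((n : ℝ) + 1 : ℝ) : EReal) < ⊤ from EReal.coe_lt_top _)]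
      with y hy
    have h1 : ENNReal.ofReal ((n : ℝ) + 1) ≤ eposPart y := by
      have h2 := eposPart_mono hy.le
      rwa [eposPart_coe] at h2
    refine lt_of_lt_of_le ?_ h1
    rw [ENNReal.ofReal_add (by positivity) zero_le_one, ENNReal.ofReal_natCast,
      ENNReal.ofReal_one]
    exact ENNReal.lt_add_right (ENNReal.natCast_ne_top n) one_ne_zero

lemma continuous_sub_const (K : ℝ) : Continuous (fun x : EReal => x - (K : EReal)) := by
  rw [continuous_iff_continuousAt]
  intro x
  have h : ContinuousAt (fun p : EReal × EReal => p.1 + p.2) (x, ((-K : ℝ) : EReal)) :=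
    EReal.continuousAt_add (by simp) (by simp)
  have h2 : ContinuousAt (fun y : EReal => (y, ((-K : ℝ) : EReal))) x :=
    (continuous_id.prodMk continuous_const).continuousAt
  have := ContinuousAt.comp (f := fun y : EReal => (y, ((-K : ℝ) : EReal))) h h2
  have heq : (fun x : EReal => x - (K : EReal)) =
      ((fun p : EReal × EReal => p.1 + p.2) ∘ (fun y : EReal => (y, ((-K : ℝ) : EReal)))) := by
    funext y
    show y - (K : EReal) = y + ((-K : ℝ) : EReal)
    rw [sub_eq_add_neg]
    norm_cast
  rw [heq]
  exact this

lemma ereal_continuous_add_const (K : ℝ) : Continuous (fun x : EReal => x + (K : EReal)) := by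
  have h := continuous_sub_const (-K)
  have heq : (fun x : EReal => x - ((-K : ℝ) : EReal)) = fun x : EReal => x + (K : EReal) := by
    funext y
    rw [sub_eq_add_neg, ← EReal.coe_neg, neg_neg]
  rwa [heq] at h

lemma sub_const_mono (K : ℝ) : Monotone (fun x : EReal => x - (K : EReal)) :=
  fun _ _ h => EReal.sub_le_sub h le_rfl

lemma coe_eposPart_sub_add {x : EReal} {K : ℝ} (hx : (K : EReal) ≤ x) :
    ((eposPart (x - (K : EReal)) : ℝ≥0∞) : EReal) + (K : EReal) = x := by
  induction x using EReal.rec with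
  | bot => exact absurd (le_bot_iff.mp hx) (EReal.coe_ne_bot K)
  | coe r =>
    have hKr : K ≤ r := by exact_mod_cast hx
    have hne : (r : EReal) - (K : EReal) ≠ ⊤ := by
      rw [← EReal.coe_sub]; exact EReal.coe_ne_top _
    have htr : ((r : EReal) - (K : EReal)).toReal = r - K := by
      rw [← EReal.coe_sub, EReal.toReal_coe]
    rw [eposPart, if_neg hne, htr, EReal.coe_ennreal_ofReal, max_eq_left (by linarith)]
    norm_cast
    ring
  | top =>
    rw [EReal.top_sub_coe, show eposPart ⊤ = ⊤ by simp [eposPart], EReal.coe_ennreal_top,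
      EReal.top_add_coe]

/-! ### A formula for `eintegral` of functions bounded below -/

lemma eposPart_key {x : EReal} {K : ℝ} (hK0 : K ≤ 0) (hK : (K : EReal) ≤ x) :
    eposPart (x - (K : EReal)) + eposPart (-x) = eposPart x + ENNReal.ofReal (-K) := by
  induction x using EReal.rec with
  | bot => exact absurd (le_bot_iff.mp hK) (EReal.coe_ne_bot K)
  | coe r =>
    have hKr : K ≤ r := by exact_mod_cast hK
    have h1 : (r : EReal) - (K : EReal) = ((r - K : ℝ) : EReal) := (EReal.coe_sub r K).symm
    have h2 : -(r : EReal) = ((-r : ℝ) : EReal) := by norm_cast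
    rw [h1, h2, eposPart_coe, eposPart_coe, eposPart_coe]
    rcases le_total r 0 with hr | hr
    · rw [ENNReal.ofReal_eq_zero.mpr hr, zero_add,
        ← ENNReal.ofReal_add (by linarith) (by linarith)]
      exact congrArg ENNReal.ofReal (by ring)
    · rw [ENNReal.ofReal_eq_zero.mpr (by linarith : -r ≤ 0), add_zero,
        ← ENNReal.ofReal_add hr (by linarith)]
      exact congrArg ENNReal.ofReal (by ring)
  | top =>
    rw [EReal.top_sub_coe, EReal.neg_top]
    simp [eposPart]

lemma ereal_sub_arith {a b n c : ℝ≥0∞} {K : ℝ} (hK0 : K ≤ 0)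
    (hc : c = ENNReal.ofReal (-K)) (hnne : n ≠ ⊤) (hkey : b + n = a + c) :
    (a : EReal) - (n : EReal) = (b : EReal) + (K : EReal) := by
  have hcne : c ≠ ⊤ := hc ▸ ENNReal.ofReal_ne_top
  have hcoe : ∀ (x : ℝ≥0∞), x ≠ ⊤ → ((x : ℝ≥0∞) : EReal) = ((x.toReal : ℝ) : EReal) := by
    intro x hx
    rw [← ENNReal.ofReal_toReal hx, EReal.coe_ennreal_ofReal,
      max_eq_left ENNReal.toReal_nonneg, ENNReal.toReal_ofReal ENNReal.toReal_nonneg]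
  by_cases hatop : a = ⊤
  · have hbtop : b = ⊤ := by
      by_contra hb'
      exact (ENNReal.add_ne_top.mpr ⟨hb', hnne⟩) (by rw [hkey, hatop, top_add])
    rw [hatop, hbtop, EReal.coe_ennreal_top, hcoe n hnne, EReal.top_sub_coe, EReal.top_add_coe]
  · have hbne : b ≠ ⊤ := by
      by_contra hb'
      subst hb'
      exact (ENNReal.add_ne_top.mpr ⟨hatop, hcne⟩) (by rw [← hkey, top_add])
    have hreal : b.toReal + n.toReal = a.toReal + (-K) := by
      have h2 := congrArg ENNReal.toReal hkey
      rw [ENNReal.toReal_add hbne hnne, ENNReal.toReal_add hatop hcne, hc,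
        ENNReal.toReal_ofReal (by linarith)] at h2
      exact h2
    rw [hcoe a hatop, hcoe n hnne, hcoe b hbne, ← EReal.coe_sub, ← EReal.coe_add]
    norm_cast
    linarith

lemma eintegral_eq {S : Type*} [MeasurableSpace S] (μ : Measure S) [IsProbabilityMeasure μ]
    (f : S → EReal) (K : ℝ) (hK0 : K ≤ 0) (hKf : ∀ s, (K : EReal) ≤ f s)
    (hm : Measurable fun s => eposPart (-f s)) :
    eintegral μ f = ((∫⁻ s, eposPart (f s - (K : EReal)) ∂μ : ℝ≥0∞) : EReal) + (K : EReal) := by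
  set c : ℝ≥0∞ := ENNReal.ofReal (-K) with hc
  have hcne : c ≠ ⊤ := ENNReal.ofReal_ne_top
  have hNle : ∀ s, eposPart (-f s) ≤ c := by
    intro s
    have h1 : -f s ≤ ((-K : ℝ) : EReal) := by
      rw [show ((-K : ℝ) : EReal) = -((K : ℝ) : EReal) by norm_cast]
      exact EReal.neg_le_neg_iff.mpr (hKf s)
    have h2 := eposPart_mono h1
    rw [eposPart_coe] at h2
    exact h2
  set a : ℝ≥0∞ := ∫⁻ s, eposPart (f s) ∂μ with ha
  set b : ℝ≥0∞ := ∫⁻ s, eposPart (f s - (K : EReal)) ∂μ with hb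
  set n : ℝ≥0∞ := ∫⁻ s, eposPart (-f s) ∂μ with hn
  have hnle : n ≤ c := by
    calc n ≤ ∫⁻ _, c ∂μ := lintegral_mono hNle
    _ = c := by simp
  have hnne : n ≠ ⊤ := (lt_of_le_of_lt hnle hcne.lt_top).ne
  have hkey : b + n = a + c :=
    calc b + n = ∫⁻ s, (eposPart (f s - (K : EReal)) + eposPart (-f s)) ∂μ :=
        (lintegral_add_right _ hm).symm
    _ = ∫⁻ s, (eposPart (f s) + c) ∂μ := lintegral_congr fun s => eposPart_key hK0 (hKf s)
    _ = a + c := by rw [lintegral_add_right _ measurable_const]; simp; rfl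
  rw [eintegral, ← ha, ← hn]
  exact ereal_sub_arith hK0 hc hnne hkey

/-! ### Core Fatou-type inequality for `ℝ≥0∞`-valued functions -/

section Core
variable {S : Type*} [MetricSpace S]

noncomputable def lipInf (φ : ℕ → S → ℝ≥0∞) (M k : ℕ) (s : S) : ℝ≥0∞ :=
  ⨅ (m : ℕ) (_ : k ≤ m) (s' : S), (min (φ m s') (M : ℝ≥0∞) + ENNReal.ofReal ((k : ℝ) * dist s s'))

lemma lipInf_le (φ : ℕ → S → ℝ≥0∞) (M : ℕ) {k m : ℕ} (hm : k ≤ m) (s s' : S) :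
    lipInf φ M k s ≤ min (φ m s') (M : ℝ≥0∞) + ENNReal.ofReal ((k : ℝ) * dist s s') :=
  iInf_le_of_le m (iInf_le_of_le hm (iInf_le _ s'))

lemma lipInf_le_min (φ : ℕ → S → ℝ≥0∞) (M : ℕ) {k m : ℕ} (hm : k ≤ m) (s : S) :
    lipInf φ M k s ≤ min (φ m s) (M : ℝ≥0∞) := by
  simpa [dist_self] using lipInf_le φ M hm s s

lemma lipInf_le_natCast (φ : ℕ → S → ℝ≥0∞) (M k : ℕ) (s : S) :
    lipInf φ M k s ≤ (M : ℝ≥0∞) :=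
  (lipInf_le_min φ M le_rfl s).trans (min_le_right _ _)

lemma lipInf_ne_top (φ : ℕ → S → ℝ≥0∞) (M k : ℕ) (s : S) : lipInf φ M k s ≠ ⊤ :=
  ((lipInf_le_natCast φ M k s).trans_lt (ENNReal.natCast_lt_top M)).ne

lemma lipInf_lip (φ : ℕ → S → ℝ≥0∞) (M k : ℕ) (s t : S) :
    lipInf φ M k s ≤ lipInf φ M k t + ENNReal.ofReal ((k : ℝ) * dist s t) := by
  rw [← tsub_le_iff_right]
  refine le_iInf fun m => le_iInf fun hm => le_iInf fun s' => ?_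
  rw [tsub_le_iff_right]
  calc lipInf φ M k s ≤ min (φ m s') (M : ℝ≥0∞) + ENNReal.ofReal ((k : ℝ) * dist s s') :=
      lipInf_le φ M hm s s'
  _ ≤ min (φ m s') (M : ℝ≥0∞) +
      (ENNReal.ofReal ((k : ℝ) * dist t s') + ENNReal.ofReal ((k : ℝ) * dist s t)) := by
      refine add_le_add_right ?_ _
      rw [← ENNReal.ofReal_add (by positivity) (by positivity)]
      refine ENNReal.ofReal_le_ofReal ?_
      rw [← mul_add]
      refine mul_le_mul_of_nonneg_left ?_ (by positivity)
      calc dist s s' ≤ dist s t + dist t s' := dist_triangle s t s'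
      _ = dist t s' + dist s t := by ring
  _ = min (φ m s') (M : ℝ≥0∞) + ENNReal.ofReal ((k : ℝ) * dist t s') +
      ENNReal.ofReal ((k : ℝ) * dist s t) := by rw [add_assoc]

lemma lipInf_mono (φ : ℕ → S → ℝ≥0∞) {M M' k k' : ℕ} (hM : M ≤ M') (hk : k ≤ k') (s : S) :
    lipInf φ M k s ≤ lipInf φ M' k' s := by
  refine le_iInf fun m => le_iInf fun hm => le_iInf fun s' => ?_
  refine (lipInf_le φ M (hk.trans hm) s s').trans (add_le_add ?_ ?_)
  · exact min_le_min le_rfl (Nat.cast_le.mpr hM)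
  · exact ENNReal.ofReal_le_ofReal (mul_le_mul_of_nonneg_right (Nat.cast_le.mpr hk)
      dist_nonneg)

lemma lipInf_toReal_lip (φ : ℕ → S → ℝ≥0∞) (M k : ℕ) :
    LipschitzWith (k : NNReal) (fun s => (lipInf φ M k s).toReal) := by
  refine LipschitzWith.of_dist_le_mul fun s t => ?_
  have key : ∀ s t : S, (lipInf φ M k s).toReal - (lipInf φ M k t).toReal
      ≤ (k : ℝ) * dist s t := by
    intro s t
    rw [sub_le_iff_le_add]
    have h1 := lipInf_lip φ M k s t
    have h2 := ENNReal.toReal_mono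
      (ENNReal.add_ne_top.mpr ⟨lipInf_ne_top φ M k t, ENNReal.ofReal_ne_top⟩) h1
    rw [ENNReal.toReal_add (lipInf_ne_top φ M k t) ENNReal.ofReal_ne_top,
      ENNReal.toReal_ofReal (by positivity)] at h2
    linarith
  rw [Real.dist_eq, abs_sub_le_iff]
  constructor
  · simpa using key s t
  · simpa [dist_comm] using key t s

lemma lipInf_continuous (φ : ℕ → S → ℝ≥0∞) (M k : ℕ) : Continuous (lipInf φ M k) := by
  have h : lipInf φ M k = fun s => ENNReal.ofReal ((lipInf φ M k s).toReal) := by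
    funext s
    rw [ENNReal.ofReal_toReal (lipInf_ne_top φ M k s)]
  rw [h]
  exact ENNReal.continuous_ofReal.comp (lipInf_toReal_lip φ M k).continuous

lemma le_iSup_lipInf (φ : ℕ → S → ℝ≥0∞) (s : S) :
    liminf (fun p : ℕ × S => φ p.1 p.2) (atTop ×ˢ 𝓝 s) ≤ ⨆ k, lipInf φ k k s := by
  refine le_of_forall_lt fun b hb => ?_
  obtain ⟨c, hbc, hcl⟩ := exists_between hb
  have hev : ∀ᶠ p in atTop ×ˢ (𝓝 s), c < φ p.1 p.2 := eventually_lt_of_lt_liminf hcl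
  rw [Filter.eventually_prod_iff] at hev
  obtain ⟨pa, hpa, pb, hpb, himp⟩ := hev
  obtain ⟨N, hN⟩ := Filter.eventually_atTop.mp hpa
  obtain ⟨δ, hδ, hball⟩ := Metric.eventually_nhds_iff_ball.mp hpb
  have hbtop : b ≠ ⊤ := hb.ne_top
  obtain ⟨M, hM⟩ := ENNReal.exists_nat_gt hbtop
  set k := max N (max M ⌈(M : ℝ) / δ⌉₊) with hk
  refine lt_of_lt_of_le ?_ (le_iSup (fun k => lipInf φ k k s) k)
  have hmin : b < min c (M : ℝ≥0∞) := lt_min hbc hM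
  refine hmin.trans_le (le_iInf fun m => le_iInf fun hm => le_iInf fun s' => ?_)
  have hMk : M ≤ k := (le_max_left M _).trans (le_max_right N _)
  have hNk : N ≤ k := le_max_left _ _
  by_cases hdist : dist s' s < δ
  · have h1 : c < φ m s' := himp (hN m (hNk.trans hm)) (hball s' (Metric.mem_ball.mpr hdist))
    have h2 : min c (M : ℝ≥0∞) ≤ min (φ m s') (k : ℝ≥0∞) :=
      min_le_min h1.le (Nat.cast_le.mpr hMk)
    exact h2.trans (self_le_add_right _ _)
  · push_neg at hdist
    have h2 : (M : ℝ) ≤ (k : ℝ) * dist s s' := by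
      have hceil : (M : ℝ) / δ ≤ (⌈(M : ℝ) / δ⌉₊ : ℝ) := Nat.le_ceil _
      have hkceil : (⌈(M : ℝ) / δ⌉₊ : ℝ) ≤ (k : ℝ) :=
        Nat.cast_le.mpr ((le_max_right M _).trans (le_max_right N _))
      have h3 : (M : ℝ) ≤ (k : ℝ) * δ := by
        rw [div_le_iff₀ hδ] at hceil
        nlinarith
      calc (M : ℝ) ≤ (k : ℝ) * δ := h3
      _ ≤ (k : ℝ) * dist s s' := by
        refine mul_le_mul_of_nonneg_left ?_ (by positivity)
        rwa [dist_comm]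
    calc min c (M : ℝ≥0∞) ≤ (M : ℝ≥0∞) := min_le_right _ _
    _ = ENNReal.ofReal (M : ℝ) := (ENNReal.ofReal_natCast M).symm
    _ ≤ ENNReal.ofReal ((k : ℝ) * dist s s') := ENNReal.ofReal_le_ofReal h2
    _ ≤ min (φ m s') (k : ℝ≥0∞) + ENNReal.ofReal ((k : ℝ) * dist s s') := self_le_add_left _ _

variable [MeasurableSpace S] [BorelSpace S]

lemma lintegral_lipInf_le (μs : ℕ → Measure S) (μ : Measure S)
    [∀ n, IsProbabilityMeasure (μs n)] [IsProbabilityMeasure μ]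
    (hweak : ∀ h : S → ℝ, Continuous h → (∃ C : ℝ, ∀ s, |h s| ≤ C) →
      Tendsto (fun n => ∫ s, h s ∂(μs n)) atTop (𝓝 (∫ s, h s ∂μ)))
    (φ : ℕ → S → ℝ≥0∞) (k : ℕ) :
    ∫⁻ s, lipInf φ k k s ∂μ ≤ liminf (fun n => ∫⁻ s, φ n s ∂(μs n)) atTop := by
  set H : S → ℝ := fun s => (lipInf φ k k s).toReal with hH
  have hHcont : Continuous H := by
    rw [continuous_iff_continuousAt]
    intro s
    exact (ENNReal.tendsto_toReal (lipInf_ne_top φ k k s)).comp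
      (lipInf_continuous φ k k).continuousAt
  have hbd : ∃ C : ℝ, ∀ s, |H s| ≤ C := by
    refine ⟨(k : ℝ), fun s => ?_⟩
    rw [abs_of_nonneg ENNReal.toReal_nonneg]
    calc H s ≤ ((k : ℝ≥0∞)).toReal :=
        ENNReal.toReal_mono (ENNReal.natCast_ne_top k) (lipInf_le_natCast φ k k s)
    _ = (k : ℝ) := by simp
  have hint : ∀ (ν : Measure S),
      ∫ s, H s ∂ν = (∫⁻ s, lipInf φ k k s ∂ν).toReal := fun ν =>
    integral_toReal ((lipInf_continuous φ k k).measurable.aemeasurable)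
      (ae_of_all _ fun s => (lipInf_ne_top φ k k s).lt_top)
  have hfin : ∀ (ν : Measure S) [IsProbabilityMeasure ν],
      ∫⁻ s, lipInf φ k k s ∂ν ≠ ⊤ := by
    intro ν _
    have h1 : ∫⁻ s, lipInf φ k k s ∂ν ≤ (k : ℝ≥0∞) := by
      calc ∫⁻ s, lipInf φ k k s ∂ν ≤ ∫⁻ _, (k : ℝ≥0∞) ∂ν :=
          lintegral_mono (lipInf_le_natCast φ k k)
      _ = (k : ℝ≥0∞) := by simp
    exact (h1.trans_lt (ENNReal.natCast_lt_top k)).ne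
  have htendR := hweak H hHcont hbd
  have htend : Tendsto (fun n => ∫⁻ s, lipInf φ k k s ∂(μs n)) atTop
      (𝓝 (∫⁻ s, lipInf φ k k s ∂μ)) := by
    rw [← ENNReal.tendsto_toReal_iff (fun n => hfin (μs n)) (hfin μ)]
    have h2 : (fun n => (∫⁻ s, lipInf φ k k s ∂(μs n)).toReal)
        = fun n => ∫ s, H s ∂(μs n) := funext fun n => (hint (μs n)).symm
    rw [h2, ← hint μ]
    exact htendR
  have hev : ∀ᶠ n in atTop, ∫⁻ s, lipInf φ k k s ∂(μs n) ≤ ∫⁻ s, φ n s ∂(μs n) := by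
    filter_upwards [eventually_ge_atTop k] with n hn
    exact lintegral_mono fun s => (lipInf_le_min φ k hn s).trans (min_le_left _ _)
  calc ∫⁻ s, lipInf φ k k s ∂μ = liminf (fun n => ∫⁻ s, lipInf φ k k s ∂(μs n)) atTop :=
      htend.liminf_eq.symm
  _ ≤ liminf (fun n => ∫⁻ s, φ n s ∂(μs n)) atTop := liminf_le_liminf hev

lemma core_fatou (μs : ℕ → Measure S) (μ : Measure S)
    [∀ n, IsProbabilityMeasure (μs n)] [IsProbabilityMeasure μ]
    (hweak : ∀ h : S → ℝ, Continuous h → (∃ C : ℝ, ∀ s, |h s| ≤ C) →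
      Tendsto (fun n => ∫ s, h s ∂(μs n)) atTop (𝓝 (∫ s, h s ∂μ)))
    (φ : ℕ → S → ℝ≥0∞) :
    ∫⁻ s, liminf (fun p : ℕ × S => φ p.1 p.2) (atTop ×ˢ 𝓝 s) ∂μ ≤
      liminf (fun n => ∫⁻ s, φ n s ∂(μs n)) atTop := by
  calc ∫⁻ s, liminf (fun p : ℕ × S => φ p.1 p.2) (atTop ×ˢ 𝓝 s) ∂μ
      ≤ ∫⁻ s, ⨆ k, lipInf φ k k s ∂μ := lintegral_mono fun s => le_iSup_lipInf φ s
  _ = ⨆ k, ∫⁻ s, lipInf φ k k s ∂μ :=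
      lintegral_iSup (fun k => (lipInf_continuous φ k k).measurable)
        (fun k k' hkk' s => lipInf_mono φ hkk' hkk' s)
  _ ≤ liminf (fun n => ∫⁻ s, φ n s ∂(μs n)) atTop :=
      iSup_le fun k => lintegral_lipInf_le μs μ hweak φ k

end Core

/-! ### Lower semicontinuity of the joint liminf -/

lemma lsc_liminf {S : Type*} [TopologicalSpace S] (φ : ℕ → S → ℝ≥0∞) :
    LowerSemicontinuous fun s => liminf (fun p : ℕ × S => φ p.1 p.2) (atTop ×ˢ 𝓝 s) := by
  intro s a ha
  obtain ⟨b, hab, hbl⟩ := exists_between ha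
  have hev : ∀ᶠ p in atTop ×ˢ (𝓝 s), b < φ p.1 p.2 := eventually_lt_of_lt_liminf hbl
  rw [Filter.eventually_prod_iff] at hev
  obtain ⟨pa, hpa, pb, hpb, himp⟩ := hev
  obtain ⟨U, hUpb, hUopen, hsU⟩ := mem_nhds_iff.mp hpb
  filter_upwards [hUopen.mem_nhds hsU] with t htU
  refine lt_of_lt_of_le hab (le_liminf_of_le (by isBoundedDefault) ?_)
  have hUt : ∀ᶠ y in 𝓝 t, pb y := mem_of_superset (hUopen.mem_nhds htU) hUpb
  filter_upwards [hpa.prod_mk hUt] with p hp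
  exact (himp hp.1 hp.2).le

/-- Fatou's lemma for weakly converging probability measures and functions
uniformly bounded below by a real constant `K`. -/
theorem fatou_weak_convergence_bounded_below
    {S : Type*} [MetricSpace S] [MeasurableSpace S] [BorelSpace S]
    (μs : ℕ → Measure S) (μ : Measure S)
    [∀ n, IsProbabilityMeasure (μs n)] [IsProbabilityMeasure μ]
    (hweak : ∀ h : S → ℝ, Continuous h → (∃ C : ℝ, ∀ s, |h s| ≤ C) →
      Tendsto (fun n => ∫ s, h s ∂(μs n)) atTop (𝓝 (∫ s, h s ∂μ)))
    (f : ℕ → S → EReal) (hf : ∀ n, Measurable (f n))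
    (K : ℝ) (hK : ∀ n s, (K : EReal) ≤ f n s) :
    eintegral μ (fun s => liminf (fun p : ℕ × S => f p.1 p.2) (atTop ×ˢ 𝓝 s)) ≤
      liminf (fun n => eintegral (μs n) (f n)) atTop := by
  set K' : ℝ := min K 0 with hK'def
  have hK'0 : K' ≤ 0 := min_le_right _ _
  have hK'K : (K' : EReal) ≤ (K : EReal) := by exact_mod_cast min_le_left K 0
  have hK' : ∀ n s, (K' : EReal) ≤ f n s := fun n s => hK'K.trans (hK n s)
  set F : EReal → ℝ≥0∞ := fun x => eposPart (x - (K' : EReal)) with hFdef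
  have hFmono : Monotone F := fun x y h => eposPart_mono (sub_const_mono K' h)
  have hFcont : Continuous F := continuous_eposPart.comp (continuous_sub_const K')
  set φ : ℕ → S → ℝ≥0∞ := fun n s => F (f n s) with hφdef
  have hφmeas : ∀ n, Measurable (φ n) := fun n =>
    (eposPart_measurable.comp (sub_const_mono K').measurable).comp (hf n)
  set g : S → EReal := fun s => liminf (fun p : ℕ × S => f p.1 p.2) (atTop ×ˢ 𝓝 s) with hgdef
  have hgK : ∀ s, (K' : EReal) ≤ g s := fun s =>
    le_liminf_of_le (by isBoundedDefault) (Eventually.of_forall fun p => hK' p.1 p.2)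
  have hFg : ∀ s, F (g s) = liminf (fun p : ℕ × S => φ p.1 p.2) (atTop ×ˢ 𝓝 s) := by
    intro s
    have h1 := hFmono.map_liminf_of_continuousAt (F := atTop ×ˢ (𝓝 s))
      (fun p : ℕ × S => f p.1 p.2) hFcont.continuousAt
    exact h1
  set ψ : S → ℝ≥0∞ := fun s => liminf (fun p : ℕ × S => φ p.1 p.2) (atTop ×ˢ 𝓝 s) with hψdef
  have hψmeas : Measurable ψ := (lsc_liminf φ).measurable
  have hgψ : ∀ s, g s = ((ψ s : ℝ≥0∞) : EReal) + (K' : EReal) := by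
    intro s
    have h2 : ψ s = F (g s) := (hFg s).symm
    rw [h2]
    exact (coe_eposPart_sub_add (hgK s)).symm
  have hmg : Measurable fun s => eposPart (-g s) := by
    have h_anti : Antitone fun y : ℝ≥0∞ => eposPart (-(((y : ℝ≥0∞) : EReal) + (K' : EReal))) := by
      intro y y' hyy'
      refine eposPart_mono (EReal.neg_le_neg_iff.mpr ?_)
      exact add_le_add_left (EReal.coe_ennreal_le_coe_ennreal_iff.mpr hyy') _
    have heq : (fun s => eposPart (-g s))
        = (fun y : ℝ≥0∞ => eposPart (-(((y : ℝ≥0∞) : EReal) + (K' : EReal)))) ∘ ψ :=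
      funext fun s => by rw [Function.comp_apply, ← hgψ s]
    rw [heq]
    exact h_anti.measurable.comp hψmeas
  have hLHS : eintegral μ g = ((∫⁻ s, ψ s ∂μ : ℝ≥0∞) : EReal) + (K' : EReal) := by
    rw [eintegral_eq μ g K' hK'0 hgK hmg]
    have h3 : ∫⁻ s, eposPart (g s - (K' : EReal)) ∂μ = ∫⁻ s, ψ s ∂μ :=
      lintegral_congr fun s => hFg s
    rw [h3]
  set L : ℕ → ℝ≥0∞ := fun n => ∫⁻ s, φ n s ∂(μs n) with hLdef
  have hmfn : ∀ n, Measurable fun s => eposPart (-f n s) := by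
    intro n
    have h_anti : Antitone fun x : EReal => eposPart (-x) := fun x y hxy =>
      eposPart_mono (EReal.neg_le_neg_iff.mpr hxy)
    exact h_anti.measurable.comp (hf n)
  have hRHSn : ∀ n, eintegral (μs n) (f n) = ((L n : ℝ≥0∞) : EReal) + (K' : EReal) := fun n =>
    eintegral_eq (μs n) (f n) K' hK'0 (hK' n) (hmfn n)
  have hGmap : liminf (fun n => eintegral (μs n) (f n)) atTop
      = ((liminf L atTop : ℝ≥0∞) : EReal) + (K' : EReal) := by
    have hGmono : Monotone (fun y : ℝ≥0∞ => ((y : ℝ≥0∞) : EReal) + (K' : EReal)) :=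
      fun y y' h => add_le_add_left (EReal.coe_ennreal_le_coe_ennreal_iff.mpr h) _
    have hGcont : Continuous (fun y : ℝ≥0∞ => ((y : ℝ≥0∞) : EReal) + (K' : EReal)) :=
      (ereal_continuous_add_const K').comp continuous_coe_ennreal_ereal
    have h1 := hGmono.map_liminf_of_continuousAt (F := atTop) L hGcont.continuousAt
    rw [show (fun n => eintegral (μs n) (f n))
      = fun n => ((L n : ℝ≥0∞) : EReal) + (K' : EReal) from funext hRHSn]
    simpa [Function.comp_def] using h1.symm
  rw [hLHS, hGmap]
  have hcore : ∫⁻ s, ψ s ∂μ ≤ liminf L atTop := core_fatou μs μ hweak φ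
  exact add_le_add_left (EReal.coe_ennreal_le_coe_ennreal_iff.mpr hcore) _
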